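/- For every t ≥ 1 and n = 2^t, the covolume (fundamental volume) of the Barnes–Wall lattice BW_n ⊆ ℝⁿ equals (n/2)^{n/4}; equivalently, vol(BW_{2n}) = 2^{n/2}·vol(BW_n)² with vol(BW_2) = 1. -/

import Mathlib

open Matrix

noncomputable section

/-- `Rmat n` is the `n × n` matrix `I_{n/2} ⊗ R(2)`, block diagonal with
`2 × 2` blocks `[[1, 1], [1, -1]]`, acting on row vectors on the right. -/
def Rmat (n : ℕ) : Matrix (Fin n) (Fin n) ℝ :=
  Matrix.of fun i j =>
    if (i : ℕ) / 2 = (j : ℕ) / 2 then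
      if (i : ℕ) % 2 = 1 ∧ (j : ℕ) % 2 = 1 then -1 else 1
    else 0

/-- Concatenation `(u, v)` of two `2^t`-dimensional vectors into a
`2^(t+1)`-dimensional vector. -/
def concat {t : ℕ} (u v : Fin (2 ^ t) → ℝ) : Fin (2 ^ (t + 1)) → ℝ := fun i =>
  if h : (i : ℕ) < 2 ^ t then u ⟨i, h⟩
  else v ⟨(i : ℕ) - 2 ^ t, by
    have hi := i.isLt
    have h2 : 2 ^ (t + 1) = 2 ^ t + 2 ^ t := by rw [pow_succ]; ring
    omega⟩

/-- The Barnes–Wall lattices `BW_{2^t} ⊆ ℝ^{2^t}`, defined recursively by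
`BW_2 = ℤ²` and `BW_{2n} = {(u, u + v) : u ∈ BW_n, v ∈ BW_n · R(n)}`. -/
def BW : ∀ t : ℕ, Set (Fin (2 ^ t) → ℝ)
  | 0 => {x | ∀ i, ∃ z : ℤ, x i = (z : ℝ)}
  | (t + 1) =>
    {x | ∃ u v : Fin (2 ^ t) → ℝ, u ∈ BW t ∧
      (∃ w ∈ BW t, v = Matrix.vecMul w (Rmat (2 ^ t))) ∧ x = concat u (u + v)}

/-- `RBW_n = {x · R(n) : x ∈ BW_n}`. -/
def RBW (t : ℕ) : Set (Fin (2 ^ t) → ℝ) :=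
  (fun x => Matrix.vecMul x (Rmat (2 ^ t))) '' BW t

/-- Squared Euclidean norm. -/
def sqnorm {m : ℕ} (x : Fin m → ℝ) : ℝ := ∑ i, x i ^ 2

/-- `minDist Λ` is the minimum of `‖x‖²` over nonzero `x ∈ Λ`. -/
def minDist {m : ℕ} (Λ : Set (Fin m → ℝ)) : ℝ :=
  sInf (sqnorm '' {x ∈ Λ | x ≠ 0})

/-- `B` is (the matrix of) a `ℤ`-basis of `Λ`: `B` is invertible and `Λ` is the set
of integer combinations of the rows of `B`. The covolume of `Λ` is then `|det B|`. -/
def IsZBasis {m : ℕ} (B : Matrix (Fin m) (Fin m) ℝ) (Λ : Set (Fin m → ℝ)) : Prop :=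
  B.det ≠ 0 ∧
    Λ = {x | ∃ z : Fin m → ℤ, x = Matrix.vecMul (fun i => (z i : ℝ)) B}

/-! ### Auxiliary definitions and lemmas for the covolume computation -/

/-- The index equivalence splitting `Fin (2^(t+1))` into two halves. -/
def sumEquiv (t : ℕ) : Fin (2 ^ t) ⊕ Fin (2 ^ t) ≃ Fin (2 ^ (t + 1)) :=
  finSumFinEquiv.trans (finCongr (by rw [pow_succ]; ring))

/-- The recursively defined basis matrix of `BW t`. -/
def bwBasis : ∀ t : ℕ, Matrix (Fin (2 ^ t)) (Fin (2 ^ t)) ℝ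
  | 0 => 1
  | (t + 1) => Matrix.reindex (sumEquiv t) (sumEquiv t)
      (Matrix.fromBlocks (bwBasis t) (bwBasis t) 0 (bwBasis t * Rmat (2 ^ t)))

lemma concat_eq {t : ℕ} (u v : Fin (2 ^ t) → ℝ) (j : Fin (2 ^ (t + 1))) :
    concat u v j = Sum.elim u v ((sumEquiv t).symm j) := by
  obtain ⟨p, rfl⟩ : ∃ p, (sumEquiv t) p = j := ⟨_, (sumEquiv t).apply_symm_apply j⟩
  rw [Equiv.symm_apply_apply]
  cases p with
  | inl a =>
    have hv : ((sumEquiv t (Sum.inl a) : Fin (2 ^ (t + 1))) : ℕ) = (a : ℕ) := by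
      simp [sumEquiv]
    rw [concat, dif_pos (hv ▸ a.isLt)]
    exact congrArg u (Fin.ext hv)
  | inr a =>
    have hv : ((sumEquiv t (Sum.inr a) : Fin (2 ^ (t + 1))) : ℕ) = 2 ^ t + (a : ℕ) := by
      simp [sumEquiv]; omega
    rw [concat, dif_neg (by omega)]
    simp only [Sum.elim_inr]
    refine congrArg v (Fin.ext ?_)
    show ((sumEquiv t (Sum.inr a) : Fin (2 ^ (t + 1))) : ℕ) - 2 ^ t = (a : ℕ)
    omega

lemma vecMul_bwBasis_succ {t : ℕ} (y : Fin (2 ^ (t + 1)) → ℝ) :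
    Matrix.vecMul y (bwBasis (t + 1)) =
      concat (Matrix.vecMul (fun i => y (sumEquiv t (Sum.inl i))) (bwBasis t))
        (Matrix.vecMul (fun i => y (sumEquiv t (Sum.inl i))) (bwBasis t) +
         Matrix.vecMul (fun i => y (sumEquiv t (Sum.inr i))) (bwBasis t * Rmat (2 ^ t))) := by
  funext j
  rw [concat_eq]
  show Matrix.vecMul y
    ((Matrix.fromBlocks _ _ _ _).submatrix (sumEquiv t).symm (sumEquiv t).symm) j = _
  rw [Matrix.submatrix_vecMul_equiv, Function.comp_apply, Equiv.symm_symm,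
    Matrix.vecMul_fromBlocks]
  simp only [Matrix.vecMul_zero, add_zero]
  rfl

/-- The equivalence exhibiting the block-diagonal structure of `Rmat (2 * m)`. -/
def pairEquiv (m : ℕ) : Fin (2 * m) ≃ Fin 2 × Fin m where
  toFun i := (⟨(i : ℕ) % 2, Nat.mod_lt _ (by norm_num)⟩, ⟨(i : ℕ) / 2, by
    have := i.isLt; omega⟩)
  invFun p := ⟨(p.1 : ℕ) + 2 * (p.2 : ℕ), by have := p.1.isLt; have := p.2.isLt; omega⟩
  left_inv i := by ext; simp; omega
  right_inv p := by
    have h1 := p.1.isLt; have h2 := p.2.isLt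
    ext <;> simp <;> omega

lemma Rmat_eq (m : ℕ) : Rmat (2 * m) =
    (Matrix.blockDiagonal (fun _ : Fin m => !![(1 : ℝ), 1; 1, -1])).submatrix
      (pairEquiv m) (pairEquiv m) := by
  ext i j
  have hi : (i : ℕ) % 2 = 0 ∨ (i : ℕ) % 2 = 1 := by omega
  have hj : (j : ℕ) % 2 = 0 ∨ (j : ℕ) % 2 = 1 := by omega
  rcases hi with hi | hi <;> rcases hj with hj | hj <;>
    simp only [Rmat, Matrix.submatrix_apply, Matrix.blockDiagonal_apply, pairEquiv,
      Equiv.coe_fn_mk, Matrix.of_apply, hi, hj, Fin.mk.injEq] <;>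
    split_ifs <;>
    simp_all [Matrix.cons_val_zero, Matrix.cons_val_one, Matrix.head_cons]

lemma det_Rmat (m : ℕ) : (Rmat (2 * m)).det = (-2 : ℝ) ^ m := by
  rw [Rmat_eq, Matrix.det_submatrix_equiv_self, Matrix.det_blockDiagonal]
  simp [Matrix.det_fin_two_of]
  norm_num

lemma det_Rmat_one : (Rmat (2 ^ 0)).det = 1 := by
  rw [show (2 : ℕ) ^ 0 = 1 from rfl, Matrix.det_fin_one]
  norm_num [Rmat]

lemma abs_det_Rmat {t : ℕ} (ht : 1 ≤ t) : |(Rmat (2 ^ t)).det| = 2 ^ (2 ^ (t - 1)) := by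
  obtain ⟨k, rfl⟩ : ∃ k, t = k + 1 := ⟨t - 1, by omega⟩
  rw [show (2 : ℕ) ^ (k + 1) = 2 * 2 ^ k by ring, det_Rmat, abs_pow]
  norm_num

lemma det_Rmat_ne_zero : ∀ t : ℕ, (Rmat (2 ^ t)).det ≠ 0
  | 0 => by rw [det_Rmat_one]; norm_num
  | (t + 1) => by
    rw [show (2 : ℕ) ^ (t + 1) = 2 * 2 ^ t by ring, det_Rmat]
    exact pow_ne_zero _ (by norm_num)

lemma bwBasis_isZBasis : ∀ t : ℕ, IsZBasis (bwBasis t) (BW t) := by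
  intro t
  induction t with
  | zero =>
    constructor
    · simp [bwBasis]
    · ext x
      simp only [BW, Set.mem_setOf_eq, bwBasis, Matrix.vecMul_one]
      constructor
      · intro h
        choose z hz using h
        exact ⟨z, funext hz⟩
      · rintro ⟨z, rfl⟩ i
        exact ⟨z i, rfl⟩
  | succ t ih =>
    obtain ⟨hdet, hset⟩ := ih
    constructor
    · rw [bwBasis, Matrix.det_reindex_self, Matrix.det_fromBlocks_zero₂₁, Matrix.det_mul]
      exact mul_ne_zero hdet (mul_ne_zero hdet (det_Rmat_ne_zero t))
    · ext x
      simp only [BW, Set.mem_setOf_eq]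
      constructor
      · rintro ⟨u, v, hu, ⟨w, hw, rfl⟩, rfl⟩
        rw [hset] at hu hw
        obtain ⟨z₁, rfl⟩ := hu
        obtain ⟨z₂, rfl⟩ := hw
        refine ⟨fun i => Sum.elim z₁ z₂ ((sumEquiv t).symm i), ?_⟩
        simp only [vecMul_bwBasis_succ, Equiv.symm_apply_apply, Sum.elim_inl, Sum.elim_inr]
        rw [← Matrix.vecMul_vecMul]
      · rintro ⟨z, rfl⟩
        refine ⟨Matrix.vecMul (fun i => ((z (sumEquiv t (Sum.inl i)) : ℤ) : ℝ)) (bwBasis t),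
          Matrix.vecMul (fun i => ((z (sumEquiv t (Sum.inr i)) : ℤ) : ℝ))
            (bwBasis t * Rmat (2 ^ t)),
          ?_, ⟨Matrix.vecMul (fun i => ((z (sumEquiv t (Sum.inr i)) : ℤ) : ℝ)) (bwBasis t),
            ?_, ?_⟩, ?_⟩
        · rw [hset]; exact ⟨_, rfl⟩
        · rw [hset]; exact ⟨_, rfl⟩
        · rw [Matrix.vecMul_vecMul]
        · rw [vecMul_bwBasis_succ]

lemma vecMul_ite {m : ℕ} (B : Matrix (Fin m) (Fin m) ℝ) (i : Fin m) :
    Matrix.vecMul (fun k => if k = i then (1 : ℝ) else 0) B = B i := by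
  funext j
  simp [Matrix.vecMul, dotProduct, ite_mul]

lemma isZBasis_rows_int {m : ℕ} {Λ : Set (Fin m → ℝ)} {B C : Matrix (Fin m) (Fin m) ℝ}
    (hB : IsZBasis B Λ) (hC : IsZBasis C Λ) :
    ∃ Z : Matrix (Fin m) (Fin m) ℤ, C = Z.map (Int.castRingHom ℝ) * B := by
  have hmem : ∀ i, C i ∈ Λ := by
    intro i
    rw [hC.2]
    refine ⟨fun k => if k = i then 1 else 0, ?_⟩
    rw [show (fun k => (((if k = i then (1 : ℤ) else 0) : ℤ) : ℝ))
        = fun k => if k = i then (1 : ℝ) else 0 from funext fun k => by split <;> simp,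
      vecMul_ite]
  have h2 : ∀ i, ∃ z : Fin m → ℤ, C i = Matrix.vecMul (fun k => ((z k : ℤ) : ℝ)) B := by
    intro i
    have := hmem i
    rw [hB.2] at this
    exact this
  choose z hz using h2
  refine ⟨Matrix.of z, ?_⟩
  ext i j
  rw [Matrix.mul_apply]
  have := congrFun (hz i) j
  rw [this]
  simp [Matrix.vecMul, dotProduct, Matrix.map_apply]

/-- Any two `ℤ`-basis matrices of the same lattice have the same `|det|`. -/
lemma isZBasis_abs_det_eq {m : ℕ} {Λ : Set (Fin m → ℝ)} {B C : Matrix (Fin m) (Fin m) ℝ}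
    (hB : IsZBasis B Λ) (hC : IsZBasis C Λ) : |C.det| = |B.det| := by
  obtain ⟨Z, hZ⟩ := isZBasis_rows_int hB hC
  obtain ⟨W, hW⟩ := isZBasis_rows_int hC hB
  have hdetC : C.det = ((Z.det : ℤ) : ℝ) * B.det := by
    rw [hZ, Matrix.det_mul]
    congr 1
    exact ((Int.castRingHom ℝ).map_det Z).symm
  have hdetB : B.det = ((W.det : ℤ) : ℝ) * C.det := by
    rw [hW, Matrix.det_mul]
    congr 1
    exact ((Int.castRingHom ℝ).map_det W).symm
  have hcancel : ((Z.det * W.det : ℤ) : ℝ) * C.det = 1 * C.det := by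
    rw [Int.cast_mul]
    rw [one_mul, mul_assoc, ← hdetB, ← hdetC]
  have h1 : (Z.det * W.det : ℤ) = 1 := by
    have := mul_right_cancel₀ hC.1 hcancel
    exact_mod_cast this
  rcases Int.isUnit_eq_one_or (IsUnit.of_mul_eq_one _ h1) with h | h <;>
    rw [hdetC, abs_mul] <;> simp [h]

lemma abs_det_bwBasis_succ (t : ℕ) :
    |(bwBasis (t + 1)).det| = |(bwBasis t).det| ^ 2 * |(Rmat (2 ^ t)).det| := by
  rw [bwBasis, Matrix.det_reindex_self, Matrix.det_fromBlocks_zero₂₁, Matrix.det_mul,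
    abs_mul, abs_mul]
  ring

lemma abs_det_bwBasis : ∀ k : ℕ, |(bwBasis (k + 1)).det| = 2 ^ (k * 2 ^ (k - 1)) := by
  intro k
  induction k with
  | zero =>
    rw [abs_det_bwBasis_succ, det_Rmat_one]
    simp [bwBasis]
  | succ j ih =>
    rw [abs_det_bwBasis_succ, ih, abs_det_Rmat (by omega : 1 ≤ j + 1), ← pow_mul, ← pow_add]
    congr 1
    show j * 2 ^ (j - 1) * 2 + 2 ^ j = (j + 1) * 2 ^ j
    cases j with
    | zero => norm_num
    | succ i =>
      show (i + 1) * 2 ^ i * 2 + 2 ^ (i + 1) = (i + 2) * 2 ^ (i + 1)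
      rw [pow_succ]
      ring

lemma rpow_target {k : ℕ} :
    ((2 : ℝ) ^ (k * 2 ^ (k - 1)) : ℝ)
      = ((2 ^ (k + 1) : ℝ) / 2) ^ ((2 ^ (k + 1) : ℝ) / 4) := by
  cases k with
  | zero => norm_num
  | succ j =>
    rw [show ((2 : ℝ) ^ (j + 2)) / 2 = (2 : ℝ) ^ (j + 1) by ring,
      show ((2 : ℝ) ^ (j + 2)) / 4 = (((2 ^ j : ℕ) : ℝ)) by push_cast; ring,
      Real.rpow_natCast, ← pow_mul]
    norm_num

/-- `BW_n` has a `ℤ`-basis, and its covolume (the absolute value of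
the determinant of any `ℤ`-basis matrix) equals `(n/2)^{n/4}`; equivalently,
`vol(BW_{2n}) = 2^{n/2}·vol(BW_n)²` with `vol(BW_2) = 1`. -/
theorem bw_covolume :
    ∀ t : ℕ, 1 ≤ t →
      (∃ B : Matrix (Fin (2 ^ t)) (Fin (2 ^ t)) ℝ, IsZBasis B (BW t)) ∧
      (∀ B : Matrix (Fin (2 ^ t)) (Fin (2 ^ t)) ℝ, IsZBasis B (BW t) →
        |B.det| = ((2 ^ t : ℝ) / 2) ^ ((2 ^ t : ℝ) / 4)) ∧
      (∀ B : Matrix (Fin (2 ^ t)) (Fin (2 ^ t)) ℝ,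
       ∀ B' : Matrix (Fin (2 ^ (t + 1))) (Fin (2 ^ (t + 1))) ℝ,
        IsZBasis B (BW t) → IsZBasis B' (BW (t + 1)) →
        |B'.det| = (2 : ℝ) ^ (2 ^ t / 2) * |B.det| ^ 2) ∧
      (∀ B : Matrix (Fin (2 ^ 1)) (Fin (2 ^ 1)) ℝ, IsZBasis B (BW 1) →
        |B.det| = 1) := by
  intro t ht
  obtain ⟨k, rfl⟩ : ∃ k, t = k + 1 := ⟨t - 1, by omega⟩
  refine ⟨⟨bwBasis (k + 1), bwBasis_isZBasis (k + 1)⟩, ?_, ?_, ?_⟩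
  · intro B hB
    rw [isZBasis_abs_det_eq (bwBasis_isZBasis (k + 1)) hB, abs_det_bwBasis k, rpow_target]
  · intro B B' hB hB'
    rw [isZBasis_abs_det_eq (bwBasis_isZBasis (k + 2)) hB',
      isZBasis_abs_det_eq (bwBasis_isZBasis (k + 1)) hB,
      abs_det_bwBasis_succ (k + 1), abs_det_Rmat (by omega : 1 ≤ k + 1),
      show (2 : ℕ) ^ (k + 1) / 2 = 2 ^ k by
        rw [pow_succ, Nat.mul_div_cancel _ (by norm_num : 0 < 2)]]
    simp only [Nat.add_sub_cancel]
    ring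
  · intro B hB
    rw [isZBasis_abs_det_eq (bwBasis_isZBasis 1) hB, abs_det_bwBasis 0]
    norm_num
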